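/- arXiv:2107.13042 — 2 statements merged into one kernel-verified Lean document; each statement's English description precedes it below -/
import Mathlib

section
/- Let R be a ring and C a class of chain complexes of right R-modules. The class ₍C₎W of all C-acyclic complexes is thick in Ch(R)_pur: for every short exact sequence of chain complexes 0 → W → X → Y → 0 that is pure exact in each degree, if any two of W, X, Y are C-acyclic then so is the third. -/
open CategoryTheory Limits

noncomputable section


namespace KFlatPaper

variable (R : Type) [Ring R]

/-- Cochain complexes of left `R`-modules (indexed by `ℤ`). -/
abbrev Cx := CochainComplex (ModuleCat.{0} R) ℤ

/-- Cochain complexes of right `R`-modules. -/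
abbrev CxOp := CochainComplex (ModuleCat.{0} Rᵐᵒᵖ) ℤ

section Tensor

variable (M : Type) [AddCommGroup M] [Module Rᵐᵒᵖ M]
variable (N : Type) [AddCommGroup N] [Module R N]

/-- The subgroup of `M ⊗[ℤ] N` generated by the balancing relations `(m·r) ⊗ n - m ⊗ (r·n)`. -/
def mtRel : AddSubgroup (TensorProduct ℤ M N) :=
  AddSubgroup.closure {z | ∃ (r : R) (m : M) (n : N),
    z = (MulOpposite.op r • m) ⊗ₜ[ℤ] n - m ⊗ₜ[ℤ] (r • n)}

/-- The tensor product `M ⊗_R N` of a right `R`-module and a left `R`-module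
(as an abelian group). -/
def mt := TensorProduct ℤ M N ⧸ mtRel R M N

instance : AddCommGroup (mt R M N) := QuotientAddGroup.Quotient.addCommGroup _

variable {R M N}
variable {M' : Type} [AddCommGroup M'] [Module Rᵐᵒᵖ M']
variable {N' : Type} [AddCommGroup N'] [Module R N']

/-- Functoriality of `mt` in both variables. -/
def mtMap (f : M →ₗ[Rᵐᵒᵖ] M') (g : N →ₗ[R] N') : mt R M N →+ mt R M' N' :=
  QuotientAddGroup.map _ _
    (TensorProduct.map (f.toAddMonoidHom.toIntLinearMap) (g.toAddMonoidHom.toIntLinearMap)).toAddMonoidHom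
    (by
      rw [mtRel, AddSubgroup.closure_le]
      rintro z ⟨r, m, n, rfl⟩
      simp only [SetLike.mem_coe, AddSubgroup.mem_comap, LinearMap.toAddMonoidHom_coe,
        map_sub, TensorProduct.map_tmul, AddMonoidHom.coe_toIntLinearMap,
        LinearMap.toAddMonoidHom_coe]
      rw [f.map_smul, g.map_smul]
      exact AddSubgroup.subset_closure ⟨r, f m, g n, rfl⟩)

end Tensor


section TensorComplex

variable {R}

/-- Degree `n` part of the tensor product complex `C ⊗_R W`. -/
abbrev tobj (C : CxOp R) (W : Cx R) (n : ℤ) : Type :=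
  DirectSum ℤ (fun i => mt R (C.X i) (W.X (n - i)))

/-- The differential of the tensor product complex `C ⊗_R W`,
given on `x ⊗ y` by `dx ⊗ y + (-1)^{|x|} x ⊗ dy`. -/
def td (C : CxOp R) (W : Cx R) (n : ℤ) : tobj C W n →+ tobj C W (n + 1) :=
  DirectSum.toAddMonoid fun i =>
    (DirectSum.of (fun j => mt R (C.X j) (W.X (n + 1 - j))) (i + 1)).comp
      (mtMap (C.d i (i + 1)).hom ((W.XIsoOfEq (show n - i = n + 1 - (i + 1) by ring)).hom.hom))
    + (((-1 : ℤˣ) ^ i : ℤˣ) : ℤ) •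
      (DirectSum.of (fun j => mt R (C.X j) (W.X (n + 1 - j))) i).comp
        (mtMap LinearMap.id
          (((W.XIsoOfEq (show n - i + 1 = n + 1 - i by ring)).hom.hom : W.X (n-i+1) →ₗ[R] W.X (n+1-i)) ∘ₗ
            ((W.d (n - i) (n - i + 1)).hom : W.X (n-i) →ₗ[R] W.X (n-i+1))))

/-- Cast between degreewise parts of the tensor complex. -/
def tcast (C : CxOp R) (W : Cx R) {m n : ℤ} (h : m = n) : tobj C W m →+ tobj C W n := by
  subst h; exact AddMonoidHom.id _

/-- `C ⊗_R W` is acyclic (exact). -/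
def TAcyclic (C : CxOp R) (W : Cx R) : Prop :=
  ∀ n : ℤ, Function.Exact (td C W n) (td C W (n + 1))

/-- Functoriality of the tensor complex in the second variable. -/
def tmapR (C : CxOp R) {W W' : Cx R} (φ : W ⟶ W') (n : ℤ) : tobj C W n →+ tobj C W' n :=
  DirectSum.toAddMonoid fun i =>
    (DirectSum.of (fun j => mt R (C.X j) (W'.X (n - j))) i).comp
      (mtMap LinearMap.id (φ.f (n - i)).hom)

/-- The boundaries subgroup `B_n(C ⊗_R W)`. -/
def tB (C : CxOp R) (W : Cx R) (n : ℤ) : AddSubgroup (tobj C W n) :=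
  AddMonoidHom.range ((tcast C W (show n - 1 + 1 = n by ring)).comp (td C W (n - 1)))

/-- The cycles subgroup `Z_n(C ⊗_R W)`. -/
def tZ (C : CxOp R) (W : Cx R) (n : ℤ) : AddSubgroup (tobj C W n) :=
  AddMonoidHom.ker (td C W n)

end TensorComplex


section ModuleTensor

variable {R}
variable (M : Type) [AddCommGroup M] [Module Rᵐᵒᵖ M]

/-- The differential of the complex `M ⊗_R W`, for a right `R`-module `M`. -/
def mtd (W : Cx R) (n m : ℤ) : mt R M (W.X n) →+ mt R M (W.X m) :=
  mtMap LinearMap.id (W.d n m).hom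

/-- `M ⊗_R W` is acyclic, for a right `R`-module `M`. -/
def MTAcyclic (W : Cx R) : Prop :=
  ∀ n : ℤ, Function.Exact (mtd M W (n - 1) n) (mtd M W n (n + 1))

end ModuleTensor

section Classes

variable {R}

/-- `W` is `𝒞`-acyclic : `C ⊗_R W` is acyclic for every `C ∈ 𝒞`. -/
def CAcyclic (𝒞 : Set (CxOp R)) (W : Cx R) : Prop := ∀ C ∈ 𝒞, TAcyclic C W

/-- A complex is acyclic (exact) if it is exact in every degree. -/
def Acyclic {S : Type} [Ring S] (X : CochainComplex (ModuleCat.{0} S) ℤ) : Prop :=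
  ∀ n : ℤ, X.ExactAt n

/-- `W` is K-flat : `E ⊗_R W` is acyclic for every acyclic complex `E`
of right `R`-modules. -/
def KFlat (W : Cx R) : Prop := ∀ E : CxOp R, Acyclic E → TAcyclic E W

/-- `W` is pure acyclic : `M ⊗_R W` is acyclic for every right `R`-module `M`. -/
def PureAcyclic (W : Cx R) : Prop :=
  ∀ (M : Type) [AddCommGroup M] [Module Rᵐᵒᵖ M], MTAcyclic M W

end Classes

section Purity

variable {R}
variable {A B C : Type} [AddCommGroup A] [Module R A] [AddCommGroup B] [Module R B]
  [AddCommGroup C] [Module R C]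

/-- `0 → A → B → C → 0` is a pure exact sequence of left `R`-modules:
it is a short exact sequence which stays short exact after applying `M ⊗_R -`
for every right `R`-module `M`. -/
def PureSESMod (f : A →ₗ[R] B) (g : B →ₗ[R] C) : Prop :=
  (Function.Injective f ∧ Function.Exact f g ∧ Function.Surjective g) ∧
  ∀ (M : Type) [AddCommGroup M] [Module Rᵐᵒᵖ M],
    Function.Injective (mtMap (LinearMap.id (M := M)) f) ∧
    Function.Exact (mtMap (LinearMap.id (M := M)) f) (mtMap (LinearMap.id (M := M)) g) ∧
    Function.Surjective (mtMap (LinearMap.id (M := M)) g)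

/-- `f` is a pure monomorphism of left `R`-modules. -/
def PureMonoMod (f : A →ₗ[R] B) : Prop :=
  Function.Injective f ∧
  ∀ (M : Type) [AddCommGroup M] [Module Rᵐᵒᵖ M],
    Function.Injective (mtMap (LinearMap.id (M := M)) f)

/-- A pure-injective left `R`-module: one which is injective relative to
pure exact sequences (equivalently, to pure monomorphisms) of modules. -/
def PureInjMod (I : Type) [AddCommGroup I] [Module R I] : Prop :=
  ∀ (A' B' : Type) [AddCommGroup A'] [Module R A'] [AddCommGroup B'] [Module R B']
    (f : A' →ₗ[R] B'), PureMonoMod f →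
      ∀ u : A' →ₗ[R] I, ∃ v : B' →ₗ[R] I, v ∘ₗ f = u

/-- A short exact sequence of complexes which is pure exact in each degree:
an admissible short exact sequence of `Ch(R)_pur`. -/
def DWPureSES {X Y Z : Cx R} (f : X ⟶ Y) (g : Y ⟶ Z) : Prop :=
  ∀ n : ℤ, PureSESMod (f.f n).hom (g.f n).hom

/-- A degreewise pure monomorphism of complexes (an admissible monomorphism
of `Ch(R)_pur`). -/
def DWPureMonoCx {X Y : Cx R} (f : X ⟶ Y) : Prop :=
  ∀ n : ℤ, PureMonoMod (f.f n).hom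

end Purity

section Cotorsion

variable {R}

/-- `Ext¹_pur(X, Y) = 0` : every degreewise pure short exact sequence
`0 → Y → Z → X → 0` splits. -/
def ExtPur1Zero (X Y : Cx R) : Prop :=
  ∀ (Z : Cx R) (i : Y ⟶ Z) (p : Z ⟶ X), DWPureSES i p → ∃ r : Z ⟶ Y, i ≫ r = 𝟙 Y

/-- The right `Ext¹_pur`-orthogonal of a class of complexes. -/
def rOrth (𝒜 : Set (Cx R)) : Set (Cx R) := {Y | ∀ X ∈ 𝒜, ExtPur1Zero X Y}

/-- The left `Ext¹_pur`-orthogonal of a class of complexes. -/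
def lOrth (ℬ : Set (Cx R)) : Set (Cx R) := {X | ∀ Y ∈ ℬ, ExtPur1Zero X Y}

/-- A cotorsion pair in `Ch(R)_pur`. -/
def CotorsionPair (𝒜 ℬ : Set (Cx R)) : Prop := 𝒜 = lOrth ℬ ∧ ℬ = rOrth 𝒜

/-- Completeness of a cotorsion pair `(𝒜, ℬ)` in `Ch(R)_pur` : every complex has
an approximation sequence on each side, by degreewise pure short exact sequences. -/
def CompletePair (𝒜 ℬ : Set (Cx R)) : Prop :=
  (∀ X : Cx R, ∃ (B A : Cx R) (i : B ⟶ A) (p : A ⟶ X),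
      DWPureSES i p ∧ A ∈ 𝒜 ∧ B ∈ ℬ) ∧
  (∀ X : Cx R, ∃ (B A : Cx R) (i : X ⟶ B) (p : B ⟶ A),
      DWPureSES i p ∧ B ∈ ℬ ∧ A ∈ 𝒜)

/-- The pair is hereditary: the left class is closed under kernels of admissible
epimorphisms between its members. -/
def HereditaryLeft (𝒜 : Set (Cx R)) : Prop :=
  ∀ (K A₁ A₂ : Cx R) (i : K ⟶ A₁) (p : A₁ ⟶ A₂),
    DWPureSES i p → A₁ ∈ 𝒜 → A₂ ∈ 𝒜 → K ∈ 𝒜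

/-- Two-out-of-three for a class, relative to the degreewise pure exact structure. -/
def TwoOutOfThree (𝒲 : Set (Cx R)) : Prop :=
  ∀ (X Y Z : Cx R) (f : X ⟶ Y) (g : Y ⟶ Z), DWPureSES f g →
    ((X ∈ 𝒲 → Y ∈ 𝒲 → Z ∈ 𝒲) ∧ (X ∈ 𝒲 → Z ∈ 𝒲 → Y ∈ 𝒲) ∧ (Y ∈ 𝒲 → Z ∈ 𝒲 → X ∈ 𝒲))

/-- `X` is a retract (direct summand) of `Y`. -/
def IsRetractOf (X Y : Cx R) : Prop := ∃ (s : X ⟶ Y) (r : Y ⟶ X), s ≫ r = 𝟙 X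

/-- A thick class: closed under retracts and satisfying two-out-of-three for
degreewise pure short exact sequences. -/
def ThickClass (𝒲 : Set (Cx R)) : Prop :=
  (∀ X Y : Cx R, IsRetractOf X Y → Y ∈ 𝒲 → X ∈ 𝒲) ∧ TwoOutOfThree 𝒲

/-- An injective object of the exact category `Ch(R)_pur`. -/
def PurInjObjCx (I : Cx R) : Prop :=
  ∀ (X Y : Cx R) (f : X ⟶ Y), DWPureMonoCx f → ∀ u : X ⟶ I, ∃ v : Y ⟶ I, f ≫ v = u

/-- An injective cotorsion pair `(𝒲, ℱ)` in `Ch(R)_pur`: a complete cotorsion pair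
with thick left class whose core `𝒲 ∩ ℱ` is the class of injective objects of
`Ch(R)_pur`. -/
def InjectiveCP (𝒲 ℱ : Set (Cx R)) : Prop :=
  CotorsionPair 𝒲 ℱ ∧ CompletePair 𝒲 ℱ ∧ ThickClass 𝒲 ∧
    (𝒲 ∩ ℱ = {I : Cx R | PurInjObjCx I})

/-- A Hovey triple `(𝒬, 𝒲, ℱ)` for the exact category `Ch(R)_pur`: the data of an
abelian (exact) model structure on `Ch(R)_pur` with cofibrant objects `𝒬`, trivial
objects `𝒲`, and fibrant objects `ℱ`. -/
def HoveyTriple (𝒬 𝒲 ℱ : Set (Cx R)) : Prop :=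
  ThickClass 𝒲 ∧
    (CotorsionPair (𝒬 ∩ 𝒲) ℱ ∧ CompletePair (𝒬 ∩ 𝒲) ℱ) ∧
    (CotorsionPair 𝒬 (𝒲 ∩ ℱ) ∧ CompletePair 𝒬 (𝒲 ∩ ℱ))

/-- A cotorsion pair is cogenerated by a set `S` when its right class is `S^⊥`;
`S` is required to be small (a set, not a proper class). -/
def CogenBySet (ℬ : Set (Cx R)) : Prop :=
  ∃ S : Set (Cx R), Small.{0} S ∧ ℬ = rOrth S

/-- The abelian model structure given by a Hovey triple is cofibrantly generated:
both of its associated complete cotorsion pairs are cogenerated by sets. -/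
def CofibrantlyGenerated (𝒬 𝒲 ℱ : Set (Cx R)) : Prop :=
  CogenBySet ℱ ∧ CogenBySet (𝒲 ∩ ℱ)

/-- The weak equivalences of the abelian model structure determined by the
Hovey triple `(𝒬, 𝒲, ℱ)` : morphisms factoring as an admissible monomorphism with
trivially cofibrant cokernel followed by an admissible epimorphism with trivially
fibrant kernel. -/
def WeakEq (𝒬 𝒲 ℱ : Set (Cx R)) : MorphismProperty (Cx R) := fun X Y f =>
  ∃ (Z : Cx R) (i : X ⟶ Z) (p : Z ⟶ Y), f = i ≫ p ∧
    (∃ (T : Cx R) (q : Z ⟶ T), DWPureSES i q ∧ T ∈ 𝒬 ∩ 𝒲) ∧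
    (∃ (K : Cx R) (k : K ⟶ Z), DWPureSES k p ∧ K ∈ 𝒲 ∩ ℱ)

/-- The homotopy category of the abelian model structure determined by a Hovey
triple: the localization at its weak equivalences. -/
def HoCat (𝒬 𝒲 ℱ : Set (Cx R)) := (WeakEq 𝒬 𝒲 ℱ).Localization

instance (𝒬 𝒲 ℱ : Set (Cx R)) : Category (HoCat 𝒬 𝒲 ℱ) := by
  unfold HoCat; infer_instance

end Cotorsion

section HomotopyCat

variable {R}

/-- The chain homotopy category `K(R)`. -/
abbrev KR := HomotopyCategory (ModuleCat.{0} R) (ComplexShape.up ℤ)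

/-- The full subcategory of `K(R)` of all complexes homotopy equivalent to
(i.e. isomorphic in `K(R)` to) a complex satisfying `P`. -/
def Ksub (P : Set (Cx R)) :=
  ObjectProperty.FullSubcategory (fun X : KR (R := R) =>
    ∃ Y : Cx R, P Y ∧
      Nonempty ((((HomotopyCategory.quotient (ModuleCat.{0} R) (ComplexShape.up ℤ))).obj Y ≅ X)))

instance (P : Set (Cx R)) : Category (Ksub P) := by
  unfold Ksub; infer_instance

/-- A contractible complex. -/
def Contractible (X : Cx R) : Prop := Nonempty (Homotopy (𝟙 X) 0)

/-- The class of complexes of pure-injective modules. -/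
def dwPI : Set (Cx R) := {X | ∀ n : ℤ, PureInjMod (R := R) (X.X n)}

/-- The class of acyclic (exact) complexes of pure-injective modules. -/
def exPI : Set (Cx R) := {X | Acyclic X ∧ ∀ n : ℤ, PureInjMod (R := R) (X.X n)}

end HomotopyCat


section QuasiIso

variable {R}
variable (M : Type) [AddCommGroup M] [Module Rᵐᵒᵖ M]

/-- Boundaries of the complex `M ⊗_R W` in degree `n`. -/
def mtB (W : Cx R) (n : ℤ) : AddSubgroup (mt R M (W.X n)) :=
  AddMonoidHom.range (mtd M W (n - 1) n)

/-- Cycles of the complex `M ⊗_R W` in degree `n`. -/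
def mtZ (W : Cx R) (n : ℤ) : AddSubgroup (mt R M (W.X n)) :=
  AddMonoidHom.ker (mtd M W n (n + 1))

/-- For a chain map `f : X → Y`, the map `M ⊗_R f` is a homology isomorphism:
it induces a bijection on the homology of the complexes `M ⊗_R X` and `M ⊗_R Y`
in every degree. -/
def MTQuasiIso {X Y : Cx R} (f : X ⟶ Y) : Prop :=
  ∀ n : ℤ,
    (∀ x ∈ mtZ M X n, mtMap (LinearMap.id (M := M)) (f.f n).hom x ∈ mtB M Y n → x ∈ mtB M X n) ∧
    (∀ y ∈ mtZ M Y n, ∃ x ∈ mtZ M X n,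
      mtMap (LinearMap.id (M := M)) (f.f n).hom x - y ∈ mtB M Y n)

/-- `f` is a pure homology isomorphism: `M ⊗_R f` is a homology isomorphism for
every right `R`-module `M`. -/
def PureQuasiIso {X Y : Cx R} (f : X ⟶ Y) : Prop :=
  ∀ (M : Type) [AddCommGroup M] [Module Rᵐᵒᵖ M], MTQuasiIso M f

/-- For a chain map `f : X → Y` and a complex `C` of right modules, `C ⊗_R f`
is a homology isomorphism. -/
def TQuasiIso (C : CxOp R) {X Y : Cx R} (f : X ⟶ Y) : Prop :=
  ∀ n : ℤ,
    (∀ x ∈ tZ C X n, tmapR C f n x ∈ tB C Y n → x ∈ tB C X n) ∧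
    (∀ y ∈ tZ C Y n, ∃ x ∈ tZ C X n, tmapR C f n x - y ∈ tB C Y n)

/-- `f` is a K-flat quism: `E ⊗_R f` is a homology isomorphism for every
acyclic complex `E` of right `R`-modules. -/
def KFlatQuism {X Y : Cx R} (f : X ⟶ Y) : Prop :=
  ∀ E : CxOp R, Acyclic E → TQuasiIso E f

end QuasiIso


section Transfinite

variable {R}

/-- The restriction of a chain `F : J ⥤ Ch(R)` to the interval below `j`. -/
def iioDiagram {J : Type} [Preorder J] (F : J ⥤ Cx R) (j : J) : Set.Iio j ⥤ Cx R :=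
  (Monotone.functor (f := fun i : Set.Iio j => (i : J)) (fun _ _ h => h)).comp F

/-- The canonical cocone on the restriction of `F` below `j`, with apex `F.obj j`. -/
def iioCocone {J : Type} [Preorder J] (F : J ⥤ Cx R) (j : J) : Cocone (iioDiagram F j) where
  pt := F.obj j
  ι :=
    { app := fun i => F.map (homOfLE i.2.le)
      naturality := fun a b h => by
        dsimp [iioDiagram]
        rw [Category.comp_id, ← F.map_comp]
        congr 1 }

end Transfinite


section Pontryagin

variable {R}
variable (M : Type) [AddCommGroup M] [Module Rᵐᵒᵖ M]

/-- The Pontryagin dual (character module) `Hom_ℤ(M, ℚ/ℤ)` of a right `R`-module,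
as a left `R`-module, where `R` acts by `(r • φ) m = φ (m • r)`. -/
def CharMod : Type := M →+ (AddCircle (1 : ℚ))

instance : AddCommGroup (CharMod M) :=
  inferInstanceAs (AddCommGroup (M →+ AddCircle (1 : ℚ)))

instance : FunLike (CharMod M) M (AddCircle (1 : ℚ)) :=
  inferInstanceAs (FunLike (M →+ AddCircle (1 : ℚ)) M (AddCircle (1 : ℚ)))

instance : AddMonoidHomClass (CharMod M) M (AddCircle (1 : ℚ)) :=
  inferInstanceAs (AddMonoidHomClass (M →+ AddCircle (1 : ℚ)) M (AddCircle (1 : ℚ)))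

variable {M}

theorem charExt {φ ψ : CharMod M} (h : ∀ m, φ m = ψ m) : φ = ψ :=
  AddMonoidHom.ext h

variable (M)

instance : Module R (CharMod M) where
  smul r φ := (φ : M →+ _).comp (DistribMulAction.toAddMonoidHom M (MulOpposite.op r))
  one_smul φ := charExt fun m => by
    show φ ((MulOpposite.op (1 : R)) • m) = φ m
    simp
  mul_smul r s φ := charExt fun m => by
    show φ ((MulOpposite.op (r * s)) • m) = φ (MulOpposite.op s • MulOpposite.op r • m)
    rw [MulOpposite.op_mul, mul_smul]
  smul_zero r := rfl
  smul_add r φ ψ := rfl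
  add_smul r s φ := charExt fun m => by
    show φ ((MulOpposite.op (r + s)) • m)
      = φ (MulOpposite.op r • m) + φ (MulOpposite.op s • m)
    rw [MulOpposite.op_add, add_smul, map_add]
  zero_smul φ := charExt fun m => by
    show φ ((MulOpposite.op (0 : R)) • m) = 0
    simp

variable {M} {N : Type} [AddCommGroup N] [Module Rᵐᵒᵖ N]

/-- The Pontryagin dual of a map of right `R`-modules. -/
def charDual (ψ : M →ₗ[Rᵐᵒᵖ] N) : CharMod N →ₗ[R] CharMod M where
  toFun φ := (φ : N →+ _).comp ψ.toAddMonoidHom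
  map_add' φ₁ φ₂ := rfl
  map_smul' r φ := charExt fun m => by
    show φ (MulOpposite.op r • ψ m) = φ (ψ (MulOpposite.op r • m))
    rw [ψ.map_smul]

theorem charDual_zero : (charDual (0 : M →ₗ[Rᵐᵒᵖ] N)) = (0 : CharMod N →ₗ[R] CharMod M) :=
  LinearMap.ext fun φ => charExt fun _ => map_zero φ

/-- The Pontryagin dual complex `Hom_ℤ(C, ℚ/ℤ)` of a complex of right `R`-modules,
a complex of left `R`-modules. -/
def charCx (C : CxOp R) : Cx R :=
  CochainComplex.of (fun n => ModuleCat.of R (CharMod (C.X (-n))))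
    (fun n => ModuleCat.ofHom (charDual (C.d (-(n+1)) (-n)).hom))
    (fun n => by
      have h : C.d (-(n+1+1)) (-(n+1)) ≫ C.d (-(n+1)) (-n) = 0 := C.d_comp_d _ _ _
      have e : (ModuleCat.ofHom (charDual (C.d (-(n+1)) (-n)).hom) ≫
          ModuleCat.ofHom (charDual (C.d (-(n+1+1)) (-(n+1))).hom))
          = ModuleCat.ofHom (charDual (C.d (-(n+1+1)) (-(n+1)) ≫ C.d (-(n+1)) (-n)).hom) := rfl
      rw [e, h, ModuleCat.hom_zero, charDual_zero]
      rfl)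

end Pontryagin

section Verdier

variable {R}

open Pretriangulated in
/-- The class of morphisms of `K(R)` whose cone is K-flat.  Inverting them gives the
Verdier quotient `K(R)/K-Flat`. -/
def WKFlatK : MorphismProperty (KR (R := R)) := fun X Y f =>
  ∃ (Z : KR (R := R)) (g : Y ⟶ Z) (h : Z ⟶ X⟦(1 : ℤ)⟧),
    (Triangle.mk f g h ∈ distTriang (KR (R := R))) ∧ KFlat Z.as

open Pretriangulated in
/-- The class of morphisms of `K(R)` whose cone is pure acyclic.  Inverting them gives the
Verdier quotient of `K(R)` by the pure acyclic complexes, i.e. `D_pur(R)`. -/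
def WPurK : MorphismProperty (KR (R := R)) := fun X Y f =>
  ∃ (Z : KR (R := R)) (g : Y ⟶ Z) (h : Z ⟶ X⟦(1 : ℤ)⟧),
    (Triangle.mk f g h ∈ distTriang (KR (R := R))) ∧ PureAcyclic Z.as

open Pretriangulated in
/-- The class of morphisms of `K(R)` whose cone is acyclic.  Inverting them gives the
Verdier quotient of `K(R)` by the acyclic complexes, i.e. the derived category `D(R)`. -/
def WAcK : MorphismProperty (KR (R := R)) := fun X Y f =>
  ∃ (Z : KR (R := R)) (g : Y ⟶ Z) (h : Z ⟶ X⟦(1 : ℤ)⟧),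
    (Triangle.mk f g h ∈ distTriang (KR (R := R))) ∧ Acyclic Z.as

variable (R)

/-- The K-flat derived category `D_{K-flat}(R) = K(R)/K-Flat`. -/
def DKFlat := (WKFlatK (R := R)).Localization

instance : Category (DKFlat R) := by unfold DKFlat; infer_instance

/-- The pure derived category `D_pur(R)`, the Verdier quotient of `K(R)` by
the pure acyclic complexes. -/
def DPur := (WPurK (R := R)).Localization

instance : Category (DPur R) := by unfold DPur; infer_instance

/-- The derived category `D(R)`, the Verdier quotient of `K(R)` by
the acyclic complexes. -/
def DerCat := (WAcK (R := R)).Localization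

instance : Category (DerCat R) := by unfold DerCat; infer_instance

/-- The derived category `D(R)` as the localization of `Ch(R)` at the
quasi-isomorphisms. -/
def DerCat' := (HomologicalComplex.quasiIso (ModuleCat.{0} R) (ComplexShape.up ℤ)).Localization

instance : Category (DerCat' R) := by unfold DerCat'; infer_instance

/-- Pure homology isomorphisms as a morphism property on `Ch(R)`. -/
def pureQuasiIsoMP : MorphismProperty (Cx R) := fun _ _ f => PureQuasiIso f

/-- The pure derived category `D_pur(R)` as the localization of `Ch(R)` at the
pure homology isomorphisms. -/
def DPur' := (pureQuasiIsoMP R).Localization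

instance : Category (DPur' R) := by unfold DPur'; infer_instance

end Verdier

section Recollement

universe v₁ u₁ v₂ u₂ v₃ u₃ w v

/-- A recollement of categories `T₁ → T₂ → T₃` : a fully faithful inclusion `i` with
left and right adjoints, and a quotient functor `q` with fully faithful left and right
adjoints, such that the essential image of `i` is the kernel of `q`. -/
structure Recollement (T₁ : Type u₁) (T₂ : Type u₂) (T₃ : Type u₃)
    [Category.{v₁} T₁] [Category.{v₂} T₂] [Category.{v₃} T₃] where
  i : T₁ ⥤ T₂
  q : T₂ ⥤ T₃
  iL : T₂ ⥤ T₁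
  iR : T₂ ⥤ T₁
  qL : T₃ ⥤ T₂
  qR : T₃ ⥤ T₂
  adj₁ : iL ⊣ i
  adj₂ : i ⊣ iR
  adj₃ : qL ⊣ q
  adj₄ : q ⊣ qR
  i_faithful : i.Faithful
  i_full : i.Full
  qL_faithful : qL.Faithful
  qL_full : qL.Full
  qR_faithful : qR.Faithful
  qR_full : qR.Full
  ess : ∀ X : T₂, IsZero (q.obj X) ↔ ∃ Y : T₁, Nonempty (i.obj Y ≅ X)

variable (T : Type u₁) [Category.{v₁} T]

/-- An object `s` of a category with coproducts is compact when every morphism from `s`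
to a coproduct factors through the coproduct of a finite subfamily. -/
def CompactObj {T : Type u₁} [Category.{v₁} T] (s : T) : Prop :=
  ∀ (J : Type) (g : J → T) (c : Cofan g), IsColimit c →
    ∀ f : s ⟶ c.pt, ∃ (t : Finset J) (c' : Cofan fun j : t => g j) (hc' : IsColimit c')
      (f' : s ⟶ c'.pt), f = f' ≫ hc'.desc (Cofan.mk c.pt fun j => c.inj j)

/-- A category with coproducts is compactly generated when there is a set of compact
objects detecting the zero objects. -/
def CompactlyGenerated (T : Type u₁) [Category.{v₁} T] : Prop :=
  HasCoproducts.{0} T ∧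
    ∃ S : Set T, Small.{0} S ∧ (∀ s ∈ S, CompactObj s) ∧
      ∀ X : T, (∀ s ∈ S, ∀ f g : (s : T) ⟶ X, f = g) → IsZero X

/-- A well generated category: there is a regular cardinal `α` and a (small) set `S`
of `α`-small perfect generators. -/
def WellGeneratedCat (T : Type u₁) [Category.{v₁} T] : Prop :=
  HasCoproducts.{0} T ∧
  ∃ α : Cardinal.{0}, α.IsRegular ∧
  ∃ S : Set T, Small.{0} S ∧
    (∀ X : T, (∀ s ∈ S, ∀ f g : (s : T) ⟶ X, f = g) → IsZero X) ∧
    (∀ s ∈ S, ∀ (J : Type) (g : J → T) (c : Cofan g), IsColimit c →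
      ∀ f : (s : T) ⟶ c.pt, ∃ t : Set J, Cardinal.mk t < α ∧
        ∀ (c' : Cofan fun j : t => g j) (hc' : IsColimit c'),
          ∃ f' : (s : T) ⟶ c'.pt, f = f' ≫ hc'.desc (Cofan.mk c.pt fun j => c.inj j)) ∧
    (∀ (J : Type) (X Y : J → T) (φ : ∀ j, X j ⟶ Y j)
        (cX : Cofan X) (hX : IsColimit cX) (cY : Cofan Y), IsColimit cY →
      (∀ s ∈ S, ∀ (j : J) (g : (s : T) ⟶ Y j), ∃ h : (s : T) ⟶ X j, h ≫ φ j = g) →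
      ∀ s ∈ S, ∀ g : (s : T) ⟶ cY.pt,
        ∃ h : (s : T) ⟶ cX.pt, h ≫ hX.desc (Cofan.mk cY.pt fun j => φ j ≫ cY.inj j) = g)

end Recollement


section Proof33

variable {R}

section MTLemmas

variable {M : Type} [AddCommGroup M] [Module Rᵐᵒᵖ M]
variable {N : Type} [AddCommGroup N] [Module R N]
variable {M' : Type} [AddCommGroup M'] [Module Rᵐᵒᵖ M']
variable {N' : Type} [AddCommGroup N'] [Module R N']
variable {M'' : Type} [AddCommGroup M''] [Module Rᵐᵒᵖ M'']
variable {N'' : Type} [AddCommGroup N''] [Module R N'']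

lemma mt_induction {P : mt R M N → Prop} (x : mt R M N)
    (h : ∀ y : TensorProduct ℤ M N, P (QuotientAddGroup.mk y)) : P x :=
  QuotientAddGroup.induction_on (C := P) x h

lemma mtMap_mk (f : M →ₗ[Rᵐᵒᵖ] M') (g : N →ₗ[R] N') (x : TensorProduct ℤ M N) :
    mtMap f g (QuotientAddGroup.mk x) =
      QuotientAddGroup.mk (TensorProduct.map f.toAddMonoidHom.toIntLinearMap
        g.toAddMonoidHom.toIntLinearMap x) := rfl

lemma mtMap_comp (f : M →ₗ[Rᵐᵒᵖ] M') (f' : M' →ₗ[Rᵐᵒᵖ] M'')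
    (g : N →ₗ[R] N') (g' : N' →ₗ[R] N'') (x : mt R M N) :
    mtMap f' g' (mtMap f g x) = mtMap (f' ∘ₗ f) (g' ∘ₗ g) x := by
  induction x using QuotientAddGroup.induction_on with | H y => ?_
  rw [mtMap_mk, mtMap_mk, mtMap_mk]
  congr 1
  induction y using TensorProduct.induction_on with
  | zero => simp
  | tmul m n => rfl
  | add a b ha hb => rw [map_add, map_add, map_add, ha, hb]

lemma mtMap_eq_zero_left (f : M →ₗ[Rᵐᵒᵖ] M') (g : N →ₗ[R] N')
    (hf : ∀ m, f m = 0) (x : mt R M N) : mtMap f g x = 0 := by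
  induction x using QuotientAddGroup.induction_on with | H y => ?_
  rw [mtMap_mk]
  have : TensorProduct.map f.toAddMonoidHom.toIntLinearMap g.toAddMonoidHom.toIntLinearMap y
      = 0 := by
    induction y using TensorProduct.induction_on with
    | zero => simp
    | tmul m n => show (f m) ⊗ₜ[ℤ] (g n) = 0; rw [hf m, TensorProduct.zero_tmul]
    | add a b ha hb => rw [map_add, ha, hb, add_zero]
  rw [this]; rfl

lemma mtMap_eq_zero_right (f : M →ₗ[Rᵐᵒᵖ] M') (g : N →ₗ[R] N')
    (hg : ∀ n, g n = 0) (x : mt R M N) : mtMap f g x = 0 := by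
  induction x using QuotientAddGroup.induction_on with | H y => ?_
  rw [mtMap_mk]
  have : TensorProduct.map f.toAddMonoidHom.toIntLinearMap g.toAddMonoidHom.toIntLinearMap y
      = 0 := by
    induction y using TensorProduct.induction_on with
    | zero => simp
    | tmul m n => show (f m) ⊗ₜ[ℤ] (g n) = 0; rw [hg n, TensorProduct.tmul_zero]
    | add a b ha hb => rw [map_add, ha, hb, add_zero]
  rw [this]; rfl

lemma mtMap_congr {f f' : M →ₗ[Rᵐᵒᵖ] M'} {g g' : N →ₗ[R] N'}
    (hf : f = f') (hg : g = g') (x : mt R M N) : mtMap f g x = mtMap f' g' x := by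
  rw [hf, hg]

end MTLemmas

section TdLemmas

lemma td_of (C : CxOp R) (W : Cx R) (n i : ℤ) (a : mt R (C.X i) (W.X (n - i))) :
    td C W n (DirectSum.of (fun i => mt R (C.X i) (W.X (n - i))) i a) =
      DirectSum.of (fun j => mt R (C.X j) (W.X (n + 1 - j))) (i + 1)
        (mtMap (C.d i (i + 1)).hom ((W.XIsoOfEq (show n - i = n + 1 - (i + 1) by ring)).hom.hom) a)
      + (((-1 : ℤˣ) ^ i : ℤˣ) : ℤ) •
        DirectSum.of (fun j => mt R (C.X j) (W.X (n + 1 - j))) i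
          (mtMap LinearMap.id
            (((W.XIsoOfEq (show n - i + 1 = n + 1 - i by ring)).hom.hom :
                W.X (n-i+1) →ₗ[R] W.X (n+1-i)) ∘ₗ
              ((W.d (n - i) (n - i + 1)).hom : W.X (n-i) →ₗ[R] W.X (n-i+1))) a) := by
  rw [td, DirectSum.toAddMonoid_of]
  rfl

lemma tmapR_of (C : CxOp R) {W W' : Cx R} (φ : W ⟶ W') (n i : ℤ)
    (a : mt R (C.X i) (W.X (n - i))) :
    tmapR C φ n (DirectSum.of (fun i => mt R (C.X i) (W.X (n - i))) i a) =
      DirectSum.of (fun j => mt R (C.X j) (W'.X (n - j))) i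
        (mtMap LinearMap.id (φ.f (n - i)).hom a) := by
  rw [tmapR, DirectSum.toAddMonoid_of]
  rfl

lemma tmapR_apply (C : CxOp R) {W W' : Cx R} (φ : W ⟶ W') (n : ℤ) (x : tobj C W n) (j : ℤ) :
    (tmapR C φ n x) j = mtMap LinearMap.id (φ.f (n - j)).hom (x j) := by
  induction x using DirectSum.induction_on with
  | zero => simp
  | of i a =>
    rw [tmapR_of]
    rcases eq_or_ne i j with rfl | h
    · rw [DirectSum.of_eq_same, DirectSum.of_eq_same]
    · rw [DirectSum.of_eq_of_ne _ _ _ h.symm, DirectSum.of_eq_of_ne _ _ _ h.symm, map_zero]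
  | add x y hx hy =>
    rw [map_add, DirectSum.add_apply, DirectSum.add_apply, map_add, hx, hy]

/-- Pointwise commutation of a chain map with `XIsoOfEq`. -/
lemma f_XIsoOfEq_apply {W W' : Cx R} (φ : W ⟶ W') {p q : ℤ} (h : p = q) (w : W.X p) :
    φ.f q ((W.XIsoOfEq h).hom w) = (W'.XIsoOfEq h).hom (φ.f p w) := by
  subst h
  rfl

lemma d_XIsoOfEq_apply (W : Cx R) {p q : ℤ} (h : p = q) (r : ℤ) (w : W.X p) :
    W.d q r ((W.XIsoOfEq h).hom w) = W.d p r w := by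
  subst h
  rfl

lemma XIsoOfEq_d_apply (W : Cx R) {q r : ℤ} (h : q = r) (p : ℤ) (w : W.X p) :
    (W.XIsoOfEq h).hom (W.d p q w) = W.d p r w := by
  subst h
  rfl

lemma d_d_apply (W : Cx R) (p q r : ℤ) (w : W.X p) : W.d q r (W.d p q w) = 0 := by
  have h := W.d_comp_d p q r
  exact (LinearMap.congr_fun (congrArg ModuleCat.Hom.hom h) w).trans rfl

lemma f_d_apply {W W' : Cx R} (φ : W ⟶ W') (p q : ℤ) (w : W.X p) :
    W'.d p q (φ.f p w) = φ.f q (W.d p q w) := by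
  have h := φ.comm p q
  exact LinearMap.congr_fun (congrArg ModuleCat.Hom.hom h) w

lemma tmapR_td (C : CxOp R) {W W' : Cx R} (φ : W ⟶ W') (n : ℤ) (x : tobj C W n) :
    td C W' n (tmapR C φ n x) = tmapR C φ (n + 1) (td C W n x) := by
  induction x using DirectSum.induction_on with
  | zero => simp
  | add x y hx hy => rw [map_add, map_add, map_add, map_add, hx, hy]
  | of i a =>
    rw [tmapR_of, td_of, td_of, map_add, map_zsmul, tmapR_of, tmapR_of]
    congr 1
    · congr 1
      rw [mtMap_comp, mtMap_comp]
      refine mtMap_congr ?_ ?_ a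
      · rw [LinearMap.comp_id, LinearMap.id_comp]
      · refine LinearMap.ext fun w => ?_
        simp only [LinearMap.comp_apply]
        exact (f_XIsoOfEq_apply φ _ w).symm
    · congr 1
      congr 1
      rw [mtMap_comp, mtMap_comp]
      refine mtMap_congr ?_ ?_ a
      · rfl
      · refine LinearMap.ext fun w => ?_
        simp only [LinearMap.comp_apply]
        rw [f_d_apply, f_XIsoOfEq_apply]

end TdLemmas

set_option maxHeartbeats 1000000 in
lemma d_d_apply' {S : Type} [Ring S] (W : CochainComplex (ModuleCat.{0} S) ℤ)
    (p q r : ℤ) (w : W.X p) : W.d q r (W.d p q w) = 0 := by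
  have h := W.d_comp_d p q r
  exact (LinearMap.congr_fun (congrArg ModuleCat.Hom.hom h) w).trans rfl

lemma td_td (C : CxOp R) (W : Cx R) (n : ℤ) (x : tobj C W n) :
    td C W (n + 1) (td C W n x) = 0 := by
  induction x using DirectSum.induction_on with
  | zero => simp
  | add x y hx hy => rw [map_add, map_add, hx, hy, add_zero]
  | of i a =>
    rw [td_of, map_add, map_zsmul, td_of, td_of, smul_add, smul_smul]
    have h1 : mtMap (C.d (i+1) (i+1+1)).hom
        ((W.XIsoOfEq (show n+1-(i+1) = n+1+1-(i+1+1) by ring)).hom.hom)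
        ((mtMap (C.d i (i+1)).hom ((W.XIsoOfEq (show n-i = n+1-(i+1) by ring)).hom.hom)) a) = 0 := by
      rw [mtMap_comp]
      exact mtMap_eq_zero_left _ _ (fun m => d_d_apply' C i (i+1) (i+1+1) m) a
    have h4 : mtMap LinearMap.id
        (((W.XIsoOfEq (show n+1-i+1 = n+1+1-i by ring)).hom.hom :
            W.X (n+1-i+1) →ₗ[R] W.X (n+1+1-i)) ∘ₗ
          ((W.d (n+1-i) (n+1-i+1)).hom : W.X (n+1-i) →ₗ[R] W.X (n+1-i+1)))
        ((mtMap LinearMap.id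
          (((W.XIsoOfEq (show n-i+1 = n+1-i by ring)).hom.hom :
              W.X (n-i+1) →ₗ[R] W.X (n+1-i)) ∘ₗ
            ((W.d (n-i) (n-i+1)).hom : W.X (n-i) →ₗ[R] W.X (n-i+1)))) a) = 0 := by
      rw [mtMap_comp]
      refine mtMap_eq_zero_right _ _ (fun w => ?_) a
      simp only [LinearMap.comp_apply]
      rw [d_XIsoOfEq_apply, d_d_apply', map_zero]
    have h23 : mtMap LinearMap.id
        (((W.XIsoOfEq (show n+1-(i+1)+1 = n+1+1-(i+1) by ring)).hom.hom :
            W.X (n+1-(i+1)+1) →ₗ[R] W.X (n+1+1-(i+1))) ∘ₗ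
          ((W.d (n+1-(i+1)) (n+1-(i+1)+1)).hom : W.X (n+1-(i+1)) →ₗ[R] W.X (n+1-(i+1)+1)))
        ((mtMap (C.d i (i+1)).hom ((W.XIsoOfEq (show n-i = n+1-(i+1) by ring)).hom.hom)) a)
      = mtMap (C.d i (i+1)).hom
        ((W.XIsoOfEq (show n+1-i = n+1+1-(i+1) by ring)).hom.hom)
        ((mtMap LinearMap.id
          (((W.XIsoOfEq (show n-i+1 = n+1-i by ring)).hom.hom :
              W.X (n-i+1) →ₗ[R] W.X (n+1-i)) ∘ₗ
            ((W.d (n-i) (n-i+1)).hom : W.X (n-i) →ₗ[R] W.X (n-i+1)))) a) := by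
      rw [mtMap_comp, mtMap_comp]
      refine mtMap_congr ?_ ?_ a
      · rw [LinearMap.id_comp, LinearMap.comp_id]
      · refine LinearMap.ext fun w => ?_
        simp only [LinearMap.comp_apply]
        rw [d_XIsoOfEq_apply, XIsoOfEq_d_apply, XIsoOfEq_d_apply, XIsoOfEq_d_apply]
    have hs : ((((-1 : ℤˣ) ^ (i+1) : ℤˣ)) : ℤ) + ((((-1 : ℤˣ) ^ i : ℤˣ)) : ℤ) = 0 := by
      rw [zpow_add_one, Units.val_mul]
      simp
    rw [h1, h4]
    conv_lhs => rw [h23]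
    simp only [map_zero, smul_zero, zero_add, add_zero]
    rw [← add_zsmul, hs, zero_zsmul]


section SESLemmas

lemma tmapR_injective (C : CxOp R) {W X : Cx R} (φ : W ⟶ X) (n : ℤ)
    (h : ∀ i : ℤ, Function.Injective
      (mtMap (LinearMap.id (M := C.X i)) (φ.f (n - i)).hom)) :
    Function.Injective (tmapR C φ n) := by
  rw [injective_iff_map_eq_zero]
  intro x hx
  refine DFinsupp.ext fun j => ?_
  refine (injective_iff_map_eq_zero _).1 (h j) _ ?_
  rw [← tmapR_apply, hx]
  rfl

lemma tmapR_surjective (C : CxOp R) {W X : Cx R} (φ : W ⟶ X) (n : ℤ)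
    (h : ∀ i : ℤ, Function.Surjective
      (mtMap (LinearMap.id (M := C.X i)) (φ.f (n - i)).hom)) :
    Function.Surjective (tmapR C φ n) := by
  intro y
  induction y using DirectSum.induction_on with
  | zero => exact ⟨0, map_zero _⟩
  | of j b =>
    obtain ⟨a, ha⟩ := h j b
    exact ⟨DirectSum.of _ j a, by rw [tmapR_of, ha]⟩
  | add u v hu hv =>
    obtain ⟨xu, hxu⟩ := hu
    obtain ⟨xv, hxv⟩ := hv
    exact ⟨xu + xv, by rw [map_add, hxu, hxv]⟩

lemma tmapR_exact (C : CxOp R) {W X Y : Cx R} (φ : W ⟶ X) (ψ : X ⟶ Y) (n : ℤ)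
    (hinj : ∀ i : ℤ, Function.Injective
      (mtMap (LinearMap.id (M := C.X i)) (φ.f (n - i)).hom))
    (hex : ∀ i : ℤ, Function.Exact
      (mtMap (LinearMap.id (M := C.X i)) (φ.f (n - i)).hom)
      (mtMap (LinearMap.id (M := C.X i)) (ψ.f (n - i)).hom)) :
    Function.Exact (tmapR C φ n) (tmapR C ψ n) := by
  classical
  intro y
  constructor
  · intro hy
    have hcomp : ∀ j : ℤ, ∃ a, mtMap (LinearMap.id (M := C.X j)) (φ.f (n - j)).hom a = y j := by
      intro j
      have h0 : mtMap (LinearMap.id (M := C.X j)) (ψ.f (n - j)).hom (y j) = 0 := by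
        rw [← tmapR_apply, hy]
        rfl
      exact (hex j (y j)).1 h0
    refine ⟨DFinsupp.mk (DFinsupp.support y) (fun j => Classical.choose (hcomp j.1)), ?_⟩
    refine DFinsupp.ext fun j => ?_
    rw [tmapR_apply, DFinsupp.mk_apply]
    split_ifs with hj
    · exact Classical.choose_spec (hcomp j)
    · rw [map_zero]
      exact (DFinsupp.notMem_support_iff.mp hj).symm
  · rintro ⟨x, rfl⟩
    refine DFinsupp.ext fun j => ?_
    rw [tmapR_apply, tmapR_apply]
    exact ((hex j).apply_apply_eq_zero (x j)).trans rfl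

end SESLemmas

section Chase

variable {A B C' : ℤ → Type}
variable [∀ n, AddCommGroup (A n)] [∀ n, AddCommGroup (B n)] [∀ n, AddCommGroup (C' n)]
variable (dA : ∀ n : ℤ, A n →+ A (n + 1)) (dB : ∀ n : ℤ, B n →+ B (n + 1))
variable (dC : ∀ n : ℤ, C' n →+ C' (n + 1))
variable (f : ∀ n, A n →+ B n) (g : ∀ n, B n →+ C' n)

lemma chase_right
    (hfd : ∀ n a, dB n (f n a) = f (n + 1) (dA n a))
    (hgd : ∀ n b, dC n (g n b) = g (n + 1) (dB n b))
    (hinj : ∀ n, Function.Injective (f n))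
    (hex : ∀ n, Function.Exact (f n) (g n))
    (hsurj : ∀ n, Function.Surjective (g n))
    (hA : ∀ n, Function.Exact (dA n) (dA (n + 1)))
    (hB : ∀ n, Function.Exact (dB n) (dB (n + 1)))
    (m : ℤ) : Function.Exact (dC (m + 1)) (dC (m + 1 + 1)) := by
  intro y
  constructor
  · intro hy
    obtain ⟨b, rfl⟩ := hsurj (m + 1 + 1) y
    have h1 : g (m+1+1+1) (dB (m+1+1) b) = 0 := by rw [← hgd, hy]
    obtain ⟨a, ha⟩ := (hex (m+1+1+1) _).1 h1
    have h2 : f (m+1+1+1+1) (dA (m+1+1+1) a) = 0 := by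
      rw [← hfd, ha, (hB (m+1+1)).apply_apply_eq_zero]
    have h3 : dA (m+1+1+1) a = 0 := hinj _ (by rw [h2, map_zero])
    obtain ⟨a', ha'⟩ := (hA (m+1+1) a).1 h3
    have h4 : dB (m+1+1) (b - f (m+1+1) a') = 0 := by
      rw [map_sub, hfd, ha', ha, sub_self]
    obtain ⟨b'', hb''⟩ := (hB (m+1) _).1 h4
    refine ⟨g (m+1) b'', ?_⟩
    rw [hgd, hb'', map_sub, (hex (m+1+1)).apply_apply_eq_zero, sub_zero]
  · rintro ⟨x, rfl⟩
    obtain ⟨b, rfl⟩ := hsurj (m+1) x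
    rw [hgd, hgd, (hB (m+1)).apply_apply_eq_zero b, map_zero]

lemma chase_left
    (hfd : ∀ n a, dB n (f n a) = f (n + 1) (dA n a))
    (hgd : ∀ n b, dC n (g n b) = g (n + 1) (dB n b))
    (hinj : ∀ n, Function.Injective (f n))
    (hex : ∀ n, Function.Exact (f n) (g n))
    (hsurj : ∀ n, Function.Surjective (g n))
    (hB : ∀ n, Function.Exact (dB n) (dB (n + 1)))
    (hC : ∀ n, Function.Exact (dC n) (dC (n + 1)))
    (m : ℤ) : Function.Exact (dA (m + 1)) (dA (m + 1 + 1)) := by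
  intro y
  constructor
  · intro hy
    have h1 : dB (m+1+1) (f (m+1+1) y) = 0 := by rw [hfd, hy, map_zero]
    obtain ⟨b, hb⟩ := (hB (m+1) _).1 h1
    have h2 : dC (m+1) (g (m+1) b) = 0 := by
      rw [hgd, hb, (hex (m+1+1)).apply_apply_eq_zero]
    obtain ⟨w, hw⟩ := (hC m _).1 h2
    obtain ⟨b₀, rfl⟩ := hsurj m w
    have h3 : g (m+1) (b - dB m b₀) = 0 := by
      rw [map_sub, ← hgd, hw, sub_self]
    obtain ⟨a', ha'⟩ := (hex (m+1) _).1 h3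
    refine ⟨a', hinj (m+1+1) ?_⟩
    rw [← hfd, ha', map_sub, hb, (hB m).apply_apply_eq_zero, sub_zero]
  · rintro ⟨x, rfl⟩
    refine hinj (m+1+1+1) ?_
    rw [map_zero, ← hfd, ← hfd, (hB (m+1)).apply_apply_eq_zero (f (m+1) x)]

lemma chase_mid
    (hfd : ∀ n a, dB n (f n a) = f (n + 1) (dA n a))
    (hgd : ∀ n b, dC n (g n b) = g (n + 1) (dB n b))
    (hinj : ∀ n, Function.Injective (f n))
    (hex : ∀ n, Function.Exact (f n) (g n))
    (hsurj : ∀ n, Function.Surjective (g n))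
    (hdB2 : ∀ n b, dB (n + 1) (dB n b) = 0)
    (hA : ∀ n, Function.Exact (dA n) (dA (n + 1)))
    (hC : ∀ n, Function.Exact (dC n) (dC (n + 1)))
    (m : ℤ) : Function.Exact (dB (m + 1)) (dB (m + 1 + 1)) := by
  intro y
  constructor
  · intro hy
    have h1 : dC (m+1+1) (g (m+1+1) y) = 0 := by rw [hgd, hy, map_zero]
    obtain ⟨c, hc⟩ := (hC (m+1) _).1 h1
    obtain ⟨b, rfl⟩ := hsurj (m+1) c
    have h3 : g (m+1+1) (y - dB (m+1) b) = 0 := by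
      rw [map_sub, ← hgd, hc, sub_self]
    obtain ⟨a, ha⟩ := (hex (m+1+1) _).1 h3
    have h4 : f (m+1+1+1) (dA (m+1+1) a) = 0 := by
      rw [← hfd, ha, map_sub, hy, hdB2 (m+1) b, sub_zero]
    have h5 : dA (m+1+1) a = 0 := hinj _ (by rw [h4, map_zero])
    obtain ⟨a', ha'⟩ := (hA (m+1) a).1 h5
    refine ⟨f (m+1) a' + b, ?_⟩
    rw [map_add, hfd, ha', ha, sub_add_cancel]
  · rintro ⟨x, rfl⟩
    exact hdB2 (m+1) x

end Chase

section Assembly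

lemma exact_congr_td (C : CxOp R) (W : Cx R) {p q : ℤ} (h : p = q)
    (he : Function.Exact (td C W p) (td C W (p + 1))) :
    Function.Exact (td C W q) (td C W (q + 1)) := by
  subst h
  exact he

lemma taShift (C : CxOp R) (W : Cx R)
    (h : ∀ m : ℤ, Function.Exact (td C W (m + 1)) (td C W (m + 1 + 1))) :
    TAcyclic C W :=
  fun n => exact_congr_td C W (show (n - 1) + 1 = n by ring) (h (n - 1))

end Assembly

end Proof33

/-- Proposition 3.3(2): the class of `𝒞`-acyclic complexes is thick in `Ch(R)_pur`:
it satisfies two-out-of-three on short exact sequences of complexes that are pure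
exact in each degree. -/
theorem cAcyclic_twoOutOfThree (𝒞 : Set (CxOp R)) :
    TwoOutOfThree {W : Cx R | CAcyclic 𝒞 W} := by
  intro X Y Z f g hses
  have hfd : ∀ (C : CxOp R) (n : ℤ) (a : tobj C X n),
      td C Y n (tmapR C f n a) = tmapR C f (n + 1) (td C X n a) :=
    fun C n a => tmapR_td C f n a
  have hgd : ∀ (C : CxOp R) (n : ℤ) (b : tobj C Y n),
      td C Z n (tmapR C g n b) = tmapR C g (n + 1) (td C Y n b) :=
    fun C n b => tmapR_td C g n b
  have hinj : ∀ (C : CxOp R) (n : ℤ), Function.Injective (tmapR C f n) :=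
    fun C n => tmapR_injective C f n (fun i => ((hses (n - i)).2 (C.X i)).1)
  have hex : ∀ (C : CxOp R) (n : ℤ), Function.Exact (tmapR C f n) (tmapR C g n) :=
    fun C n => tmapR_exact C f g n (fun i => ((hses (n - i)).2 (C.X i)).1)
      (fun i => ((hses (n - i)).2 (C.X i)).2.1)
  have hsurj : ∀ (C : CxOp R) (n : ℤ), Function.Surjective (tmapR C g n) :=
    fun C n => tmapR_surjective C g n (fun i => ((hses (n - i)).2 (C.X i)).2.2)
  refine ⟨?_, ?_, ?_⟩
  · intro hX hY C hC
    exact taShift C Z (chase_right (td C X) (td C Y) (td C Z) (tmapR C f) (tmapR C g)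
      (hfd C) (hgd C) (hinj C) (hex C) (hsurj C) (hX C hC) (hY C hC))
  · intro hX hZ C hC
    exact taShift C Y (chase_mid (td C X) (td C Y) (td C Z) (tmapR C f) (tmapR C g)
      (hfd C) (hgd C) (hinj C) (hex C) (hsurj C) (fun n b => td_td C Y n b)
      (hX C hC) (hZ C hC))
  · intro hY hZ C hC
    exact taShift C X (chase_left (td C X) (td C Y) (td C Z) (tmapR C f) (tmapR C g)
      (hfd C) (hgd C) (hinj C) (hex C) (hsurj C) (hY C hC) (hZ C hC))

end KFlatPaper
end
end

section
/- Let R be a ring and C a class of chain complexes of right R-modules. The class ₍C₎W of all C-acyclic complexes is closed under categorically pure subcomplexes and quotients: for any categorically pure short exact sequence 0 → P → W → Q → 0 of chain complexes of left R-modules, if W is C-acyclic then both P and Q are C-acyclic. -/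
open CategoryTheory Limits

noncomputable section


namespace KFlatPaper

variable (R : Type) [Ring R]

section CatPure

variable {R}

/-- A categorically pure short exact sequence of complexes: a short exact sequence
`0 → P → X → Q → 0` such that for every complex `Y` of right `R`-modules the induced
sequence of modified tensor products `0 → Y ⊗̄ P → Y ⊗̄ X → Y ⊗̄ Q → 0` (whose degree
`n` components are the quotients `(Y ⊗ -)_n / B_n (Y ⊗ -)`) is short exact. -/
def CatPureSES {P X Q : Cx R} (f : P ⟶ X) (g : X ⟶ Q) : Prop :=
  (∀ n : ℤ, Function.Injective (f.f n) ∧ Function.Exact (f.f n) (g.f n) ∧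
      Function.Surjective (g.f n)) ∧
  ∀ (Y : CxOp R) (n : ℤ),
    (∀ a : tobj Y P n, tmapR Y f n a ∈ tB Y X n → a ∈ tB Y P n) ∧
    (∀ b : tobj Y X n, tmapR Y g n b ∈ tB Y Q n ↔
        ∃ a : tobj Y P n, b - tmapR Y f n a ∈ tB Y X n) ∧
    (∀ c : tobj Y Q n, ∃ b : tobj Y X n, c - tmapR Y g n b ∈ tB Y Q n)

end CatPure

section ProofAux

variable {R}

namespace PA

variable {M : Type} [AddCommGroup M] [Module Rᵐᵒᵖ M]
variable {N : Type} [AddCommGroup N] [Module R N]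
variable {M' : Type} [AddCommGroup M'] [Module Rᵐᵒᵖ M']
variable {N' : Type} [AddCommGroup N'] [Module R N']
variable {M'' : Type} [AddCommGroup M''] [Module Rᵐᵒᵖ M'']
variable {N'' : Type} [AddCommGroup N''] [Module R N'']

/-- generator of `mt`. -/
def mtMk (m : M) (n : N) : mt R M N :=
  (QuotientAddGroup.mk (m ⊗ₜ[ℤ] n) : TensorProduct ℤ M N ⧸ mtRel R M N)

lemma mt_induction {motive : mt R M N → Prop} (zero : motive 0)
    (mk : ∀ (m : M) (n : N), motive (mtMk m n))
    (add : ∀ x y, motive x → motive y → motive (x + y)) : ∀ x, motive x := by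
  intro x
  refine QuotientAddGroup.induction_on (x : TensorProduct ℤ M N ⧸ mtRel R M N) ?_
  intro z
  induction z using TensorProduct.induction_on with
  | zero => exact zero
  | tmul m n => exact mk m n
  | add a b ha hb => exact add _ _ ha hb

lemma mtMap_mtMk (f : M →ₗ[Rᵐᵒᵖ] M') (g : N →ₗ[R] N') (m : M) (n : N) :
    mtMap f g (mtMk m n) = mtMk (f m) (g n) := rfl

lemma mtMk_add_right (m : M) (n n' : N) : mtMk (R := R) m (n + n') = mtMk m n + mtMk m n' := by
  show QuotientAddGroup.mk _ = QuotientAddGroup.mk _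
  rw [TensorProduct.tmul_add]

lemma mtMk_add_left (m m' : M) (n : N) : mtMk (R := R) (m + m') n = mtMk m n + mtMk m' n := by
  show QuotientAddGroup.mk _ = QuotientAddGroup.mk _
  rw [TensorProduct.add_tmul]

lemma mtMk_zero_right (m : M) : mtMk (R := R) m (0 : N) = 0 := by
  show QuotientAddGroup.mk _ = QuotientAddGroup.mk _
  rw [TensorProduct.tmul_zero]

lemma mtMk_zero_left (n : N) : mtMk (R := R) (0 : M) n = 0 := by
  show QuotientAddGroup.mk _ = QuotientAddGroup.mk _
  rw [TensorProduct.zero_tmul]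

lemma mtMk_rel (r : R) (m : M) (n : N) : mtMk (R := R) (MulOpposite.op r • m) n = mtMk m (r • n) := by
  show QuotientAddGroup.mk _ = QuotientAddGroup.mk _
  rw [QuotientAddGroup.eq_iff_sub_mem]
  exact AddSubgroup.subset_closure ⟨r, m, n, rfl⟩

lemma mtMap_comp_apply (f : M →ₗ[Rᵐᵒᵖ] M') (g : N →ₗ[R] N')
    (f' : M' →ₗ[Rᵐᵒᵖ] M'') (g' : N' →ₗ[R] N'') (x : mt R M N) :
    mtMap f' g' (mtMap f g x) = mtMap (f'.comp f) (g'.comp g) x := by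
  induction x using mt_induction with
  | zero => simp
  | mk m n => simp [mtMap_mtMk]
  | add a b ha hb => simp [map_add, ha, hb]

lemma mtMap_zero_right (f : M →ₗ[Rᵐᵒᵖ] M') (x : mt R M N) :
    mtMap f (0 : N →ₗ[R] N') x = 0 := by
  induction x using mt_induction with
  | zero => simp
  | mk m n => rw [mtMap_mtMk]; exact mtMk_zero_right _
  | add a b ha hb => simp [map_add, ha, hb]

lemma mtMap_zero_left (g : N →ₗ[R] N') (x : mt R M N) :
    mtMap (0 : M →ₗ[Rᵐᵒᵖ] M') g x = 0 := by
  induction x using mt_induction with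
  | zero => simp
  | mk m n => rw [mtMap_mtMk]; exact mtMk_zero_left _
  | add a b ha hb => simp [map_add, ha, hb]


section Cxlevel

variable (C : CxOp R) (W : Cx R)

lemma tcast_rfl (n : ℤ) (x : tobj C W n) : tcast C W (rfl : n = n) x = x := rfl

lemma tcast_pi {m n : ℤ} (h h' : m = n) (x : tobj C W m) :
    tcast C W h x = tcast C W h' x := rfl

lemma tcast_tcast {m n k : ℤ} (h : m = n) (h' : n = k) (x : tobj C W m) :
    tcast C W h' (tcast C W h x) = tcast C W (h.trans h') x := by
  subst h; subst h'; rfl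

lemma tcast_self {n : ℤ} (h : n = n) (x : tobj C W n) : tcast C W h x = x := rfl

lemma td_tcast {m n : ℤ} (h : m = n) (x : tobj C W m) :
    td C W n (tcast C W h x) = tcast C W (by rw [h]) (td C W m x) := by
  subst h; rfl

lemma tmapR_tcast {W' : Cx R} (φ : W ⟶ W') {m n : ℤ} (h : m = n) (x : tobj C W m) :
    tmapR C φ n (tcast C W h x) = tcast C W' h (tmapR C φ m x) := by
  subst h; rfl

lemma tcast_mem_tB {m n : ℤ} (h : m = n) (x : tobj C W m) :
    tcast C W h x ∈ tB C W n ↔ x ∈ tB C W m := by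
  subst h; rfl

lemma tB_eq_range (n : ℤ) : tB C W (n + 1) = (td C W n).range := by
  ext x
  constructor
  · rintro ⟨y, rfl⟩
    refine ⟨tcast C W (show n + 1 - 1 = n by ring) y, ?_⟩
    rw [td_tcast]
    rfl
  · rintro ⟨y, rfl⟩
    refine ⟨tcast C W (show n = n + 1 - 1 by ring) y, ?_⟩
    show tcast C W _ (td C W (n + 1 - 1) (tcast C W _ y)) = _
    rw [td_tcast, tcast_tcast]
    exact tcast_self C W _ _

lemma td_of (n i : ℤ) (x : mt R (C.X i) (W.X (n - i))) :
    td C W n (DirectSum.of (fun j => mt R (C.X j) (W.X (n - j))) i x) =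
      DirectSum.of (fun j => mt R (C.X j) (W.X (n + 1 - j))) (i + 1)
        (mtMap (C.d i (i + 1)).hom
          ((W.XIsoOfEq (show n - i = n + 1 - (i + 1) by ring)).hom.hom) x)
      + (((-1 : ℤˣ) ^ i : ℤˣ) : ℤ) •
        DirectSum.of (fun j => mt R (C.X j) (W.X (n + 1 - j))) i
          (mtMap LinearMap.id
            (((W.XIsoOfEq (show n - i + 1 = n + 1 - i by ring)).hom.hom :
                W.X (n - i + 1) →ₗ[R] W.X (n + 1 - i)) ∘ₗ
              ((W.d (n - i) (n - i + 1)).hom : W.X (n - i) →ₗ[R] W.X (n - i + 1))) x) := by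
  rw [td, DirectSum.toAddMonoid_of]
  rfl

lemma tmapR_of {W' : Cx R} (φ : W ⟶ W') (n i : ℤ) (x : mt R (C.X i) (W.X (n - i))) :
    tmapR C φ n (DirectSum.of (fun j => mt R (C.X j) (W.X (n - j))) i x) =
      DirectSum.of (fun j => mt R (C.X j) (W'.X (n - j))) i
        (mtMap LinearMap.id (φ.f (n - i)).hom x) := by
  rw [tmapR, DirectSum.toAddMonoid_of]
  rfl

end Cxlevel


section TdTd

variable (C : CxOp R) (W : Cx R)

lemma td_td (n : ℤ) (x : tobj C W n) : td C W (n + 1) (td C W n x) = 0 := by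
  induction x using DirectSum.induction_on with
  | zero => simp
  | add a b ha hb => rw [map_add, map_add, ha, hb, add_zero]
  | of i z =>
    rw [td_of, map_add, map_zsmul, td_of, td_of]
    simp only [mtMap_comp_apply]
    have e1 : ((C.d (i+1) (i+1+1)).hom : C.X (i+1) →ₗ[Rᵐᵒᵖ] C.X (i+1+1)) ∘ₗ
        ((C.d i (i+1)).hom : C.X i →ₗ[Rᵐᵒᵖ] C.X (i+1)) = 0 := by
      have := C.d_comp_d i (i+1) (i+1+1)
      rw [← ModuleCat.hom_comp, this, ModuleCat.hom_zero]
    have e4 : (((W.XIsoOfEq (show n + 1 - i + 1 = n + 1 + 1 - i by ring)).hom.hom :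
          W.X (n+1-i+1) →ₗ[R] W.X (n+1+1-i)) ∘ₗ
          ((W.d (n+1-i) (n+1-i+1)).hom : W.X (n+1-i) →ₗ[R] W.X (n+1-i+1))) ∘ₗ
        (((W.XIsoOfEq (show n - i + 1 = n + 1 - i by ring)).hom.hom :
          W.X (n-i+1) →ₗ[R] W.X (n+1-i)) ∘ₗ
          ((W.d (n-i) (n-i+1)).hom : W.X (n-i) →ₗ[R] W.X (n-i+1))) = 0 := by
      simp only [← ModuleCat.hom_comp]
      show ModuleCat.Hom.hom ((W.d (n-i) (n-i+1) ≫ (W.XIsoOfEq _).hom) ≫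
        (W.d (n+1-i) (n+1-i+1) ≫ (W.XIsoOfEq _).hom)) = 0
      rw [HomologicalComplex.d_comp_XIsoOfEq_hom, ← Category.assoc,
        HomologicalComplex.d_comp_d, Limits.zero_comp, ModuleCat.hom_zero]
    have e23 : (((W.XIsoOfEq (show n + 1 - (i+1) + 1 = n + 1 + 1 - (i+1) by ring)).hom.hom :
          W.X (n+1-(i+1)+1) →ₗ[R] W.X (n+1+1-(i+1))) ∘ₗ
          ((W.d (n+1-(i+1)) (n+1-(i+1)+1)).hom :
            W.X (n+1-(i+1)) →ₗ[R] W.X (n+1-(i+1)+1))) ∘ₗ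
        ((W.XIsoOfEq (show n - i = n + 1 - (i + 1) by ring)).hom.hom :
          W.X (n-i) →ₗ[R] W.X (n+1-(i+1))) =
        ((W.XIsoOfEq (show n + 1 - i = n + 1 + 1 - (i+1) by ring)).hom.hom :
          W.X (n+1-i) →ₗ[R] W.X (n+1+1-(i+1))) ∘ₗ
        (((W.XIsoOfEq (show n - i + 1 = n + 1 - i by ring)).hom.hom :
          W.X (n-i+1) →ₗ[R] W.X (n+1-i)) ∘ₗ
          ((W.d (n-i) (n-i+1)).hom : W.X (n-i) →ₗ[R] W.X (n-i+1))) := by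
      simp only [← ModuleCat.hom_comp]
      apply congrArg ModuleCat.Hom.hom
      rw [Category.assoc, HomologicalComplex.XIsoOfEq_hom_comp_XIsoOfEq_hom,
        HomologicalComplex.d_comp_XIsoOfEq_hom, HomologicalComplex.XIsoOfEq_hom_comp_d,
        HomologicalComplex.d_comp_XIsoOfEq_hom]
    rw [e1, e4, e23]
    have esign : (((-1 : ℤˣ) ^ (i+1) : ℤˣ) : ℤ) = -(((-1 : ℤˣ) ^ i : ℤˣ) : ℤ) := by
      rw [zpow_add_one]
      push_cast
      ring
    rw [esign]
    simp only [mtMap_zero_left, mtMap_zero_right, map_zero, smul_zero, add_zero,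
      LinearMap.id_comp, LinearMap.comp_id, neg_smul, zero_add]
    abel

end TdTd


section Nat

variable (C : CxOp R) {W W' : Cx R}

lemma xiso_comm (φ : W ⟶ W') {a b : ℤ} (h : a = b) :
    (W.XIsoOfEq h).hom ≫ φ.f b = φ.f a ≫ (W'.XIsoOfEq h).hom := by
  subst h; simp [HomologicalComplex.XIsoOfEq]

lemma xiso_d_comm (φ : W ⟶ W') {a b c : ℤ} (h : b = c) :
    W.d a b ≫ (W.XIsoOfEq h).hom ≫ φ.f c = φ.f a ≫ W'.d a b ≫ (W'.XIsoOfEq h).hom := by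
  subst h
  simp [HomologicalComplex.XIsoOfEq, HomologicalComplex.Hom.comm]

lemma tmapR_td (φ : W ⟶ W') (n : ℤ) (x : tobj C W n) :
    tmapR C φ (n + 1) (td C W n x) = td C W' n (tmapR C φ n x) := by
  induction x using DirectSum.induction_on with
  | zero => simp
  | add a b ha hb => simp only [map_add, ha, hb]
  | of i z =>
    rw [td_of, map_add, map_zsmul, tmapR_of, tmapR_of, tmapR_of, td_of]
    simp only [mtMap_comp_apply]
    have eA : ((φ.f (n+1-(i+1))).hom : W.X (n+1-(i+1)) →ₗ[R] W'.X (n+1-(i+1))) ∘ₗ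
        ((W.XIsoOfEq (show n - i = n + 1 - (i+1) by ring)).hom.hom :
          W.X (n-i) →ₗ[R] W.X (n+1-(i+1))) =
        ((W'.XIsoOfEq (show n - i = n + 1 - (i+1) by ring)).hom.hom :
          W'.X (n-i) →ₗ[R] W'.X (n+1-(i+1))) ∘ₗ
        ((φ.f (n-i)).hom : W.X (n-i) →ₗ[R] W'.X (n-i)) := by
      simp only [← ModuleCat.hom_comp]
      apply congrArg ModuleCat.Hom.hom
      exact xiso_comm φ _
    have eB : ((φ.f (n+1-i)).hom : W.X (n+1-i) →ₗ[R] W'.X (n+1-i)) ∘ₗ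
        (((W.XIsoOfEq (show n - i + 1 = n + 1 - i by ring)).hom.hom :
          W.X (n-i+1) →ₗ[R] W.X (n+1-i)) ∘ₗ
          ((W.d (n-i) (n-i+1)).hom : W.X (n-i) →ₗ[R] W.X (n-i+1))) =
        (((W'.XIsoOfEq (show n - i + 1 = n + 1 - i by ring)).hom.hom :
          W'.X (n-i+1) →ₗ[R] W'.X (n+1-i)) ∘ₗ
          ((W'.d (n-i) (n-i+1)).hom : W'.X (n-i) →ₗ[R] W'.X (n-i+1))) ∘ₗ
        ((φ.f (n-i)).hom : W.X (n-i) →ₗ[R] W'.X (n-i)) := by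
      simp only [← ModuleCat.hom_comp]
      apply congrArg ModuleCat.Hom.hom
      rw [Category.assoc]
      exact xiso_d_comm φ _
    rw [eA, eB]
    simp only [LinearMap.id_comp, LinearMap.comp_id]

end Nat


section RightExact

variable {M : Type} [AddCommGroup M] [Module Rᵐᵒᵖ M]
variable {A B Cc : Type} [AddCommGroup A] [Module R A] [AddCommGroup B] [Module R B]
  [AddCommGroup Cc] [Module R Cc]

lemma mtMk_sub_right (m : M) (n n' : B) :
    mtMk (R := R) m (n - n') = mtMk m n - mtMk m n' := by
  have h := mtMk_add_right (R := R) m (n - n') n'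
  rw [sub_add_cancel] at h
  rw [h]
  abel

lemma mtMap_surj (g : B →ₗ[R] Cc) (hg : Function.Surjective g) :
    Function.Surjective (mtMap (LinearMap.id (M := M)) g) := by
  intro z
  induction z using mt_induction with
  | zero => exact ⟨0, map_zero _⟩
  | mk m c =>
    obtain ⟨b, rfl⟩ := hg c
    exact ⟨mtMk m b, by rw [mtMap_mtMk]; rfl⟩
  | add x y hx hy =>
    obtain ⟨u, hu⟩ := hx
    obtain ⟨v, hv⟩ := hy
    exact ⟨u + v, by rw [map_add, hu, hv]⟩

lemma mtMap_exact (f : A →ₗ[R] B) (g : B →ₗ[R] Cc)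
    (hfg : Function.Exact f g) (hg : Function.Surjective g)
    (z : mt R M B) (hz : mtMap (LinearMap.id (M := M)) g z = 0) :
    ∃ w : mt R M A, mtMap (LinearMap.id (M := M)) f w = z := by
  classical
  set S : AddSubgroup (mt R M B) := (mtMap (LinearMap.id (M := M)) f).range with hS
  let π : mt R M B →+ (mt R M B ⧸ S) := QuotientAddGroup.mk' S
  have hπ : ∀ x, π x = 0 ↔ x ∈ S := fun x => QuotientAddGroup.eq_zero_iff x
  choose sec hsec using hg
  have key : ∀ (m : M) (b b' : B), g b = g b' → π (mtMk m b) = π (mtMk m b') := by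
    intro m b b' hbb
    have h0 : g (b - b') = 0 := by rw [map_sub, hbb, sub_self]
    obtain ⟨a, ha⟩ := (hfg _).mp h0
    have hmem : mtMk (R := R) m b - mtMk m b' ∈ S := by
      refine ⟨mtMk m a, ?_⟩
      rw [mtMap_mtMk]
      show mtMk (R := R) m (f a) = _
      rw [ha, mtMk_sub_right]
    have h1 : π (mtMk m b - mtMk m b') = 0 := (hπ _).mpr hmem
    rw [map_sub, sub_eq_zero] at h1
    exact h1
  let inner : M → Cc →+ (mt R M B ⧸ S) := fun m => AddMonoidHom.mk'
    (fun c => π (mtMk m (sec c))) (by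
      intro c c'
      show π (mtMk m (sec (c + c'))) = π (mtMk m (sec c)) + π (mtMk m (sec c'))
      have h1 : π (mtMk m (sec (c + c'))) = π (mtMk m (sec c + sec c')) :=
        key m _ _ (by rw [map_add, hsec, hsec, hsec])
      rw [h1, mtMk_add_right, map_add])
  let outer : M →+ (Cc →+ (mt R M B ⧸ S)) := AddMonoidHom.mk' inner (by
    intro m m'
    ext c
    show π (mtMk (m + m') (sec c)) = π (mtMk m (sec c)) + π (mtMk m' (sec c))
    rw [mtMk_add_left, map_add])
  let τ : TensorProduct ℤ M Cc →+ (mt R M B ⧸ S) := TensorProduct.liftAddHom outer (by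
    intro zz m c
    show outer (zz • m) c = outer m (zz • c)
    rw [map_zsmul outer zz m, AddMonoidHom.smul_apply, ← map_zsmul (outer m) zz c])
  have hker : mtRel R M Cc ≤ τ.ker := by
    rw [mtRel, AddSubgroup.closure_le]
    rintro x ⟨r, m, c, rfl⟩
    simp only [SetLike.mem_coe, AddMonoidHom.mem_ker, map_sub]
    have h1 : τ ((MulOpposite.op r • m) ⊗ₜ[ℤ] c) = π (mtMk (MulOpposite.op r • m) (sec c)) :=
      TensorProduct.liftAddHom_tmul _ _ _ _
    have h2 : τ (m ⊗ₜ[ℤ] (r • c)) = π (mtMk m (sec (r • c))) :=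
      TensorProduct.liftAddHom_tmul _ _ _ _
    have h3 : π (mtMk m (sec (r • c))) = π (mtMk m (r • sec c)) :=
      key m _ _ (by rw [map_smul, hsec, hsec])
    rw [h1, h2, h3, mtMk_rel, sub_self]
  let σ : mt R M Cc →+ (mt R M B ⧸ S) := QuotientAddGroup.lift (mtRel R M Cc) τ hker
  have hσ : ∀ x : mt R M B, σ (mtMap (LinearMap.id (M := M)) g x) = π x := by
    intro x
    induction x using mt_induction with
    | zero => simp
    | mk m b =>
      rw [mtMap_mtMk]
      show τ (m ⊗ₜ[ℤ] (g b)) = π (mtMk m b)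
      rw [TensorProduct.liftAddHom_tmul]
      exact key m _ _ (hsec (g b))
    | add x y hx hy => rw [map_add, map_add, hx, hy, map_add]
  have hz0 : π z = 0 := by rw [← hσ z, hz, map_zero]
  exact (hπ z).mp hz0

end RightExact

section CxRE

variable (C : CxOp R) {P W Q : Cx R}

lemma tmapR_component (φ : W ⟶ Q) (n : ℤ) (z : tobj C W n) (i : ℤ) :
    (tmapR C φ n z) i = mtMap LinearMap.id (φ.f (n - i)).hom (z i) := by
  induction z using DirectSum.induction_on with
  | zero => simp
  | of j w =>
    rw [tmapR_of]
    by_cases hji : j = i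
    · subst hji
      rw [DirectSum.of_eq_same, DirectSum.of_eq_same]
    · rw [DirectSum.of_eq_of_ne _ _ _ (Ne.symm hji), DirectSum.of_eq_of_ne _ _ _ (Ne.symm hji), map_zero]
  | add x y hx hy => simp only [map_add, DirectSum.add_apply, hx, hy]

lemma tmapR_surjective (g : W ⟶ Q) (hg : ∀ k, Function.Surjective (g.f k)) (n : ℤ) :
    Function.Surjective (tmapR C g n) := by
  intro z
  induction z using DirectSum.induction_on with
  | zero => exact ⟨0, map_zero _⟩
  | of i c =>
    obtain ⟨w, hw⟩ := mtMap_surj (g.f (n - i)).hom (hg (n - i)) c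
    exact ⟨DirectSum.of _ i w, by rw [tmapR_of, hw]⟩
  | add x y hx hy =>
    obtain ⟨u, hu⟩ := hx
    obtain ⟨v, hv⟩ := hy
    exact ⟨u + v, by rw [map_add, hu, hv]⟩

lemma tmapR_exact (f : P ⟶ W) (g : W ⟶ Q)
    (hfg : ∀ k, Function.Exact (f.f k) (g.f k)) (hg : ∀ k, Function.Surjective (g.f k))
    (n : ℤ) (z : tobj C W n) (hz : tmapR C g n z = 0) :
    ∃ w, tmapR C f n w = z := by
  classical
  have hcomp : ∀ i, mtMap LinearMap.id (g.f (n - i)).hom (z i) = 0 := by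
    intro i
    rw [← tmapR_component, hz]
    rfl
  choose w hw using fun i =>
    mtMap_exact (f.f (n - i)).hom (g.f (n - i)).hom (hfg (n - i)) (hg (n - i)) (z i) (hcomp i)
  refine ⟨DFinsupp.mk z.support (fun i => w i), ?_⟩
  refine DFinsupp.ext fun i => ?_
  rw [tmapR_component, DFinsupp.mk_apply]
  by_cases hi : i ∈ z.support
  · rw [dif_pos hi]
    exact hw i
  · rw [dif_neg hi, map_zero]
    exact (DFinsupp.notMem_support_iff.mp hi).symm

lemma tmapR_gf_zero (f : P ⟶ W) (g : W ⟶ Q)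
    (hfg : ∀ k, Function.Exact (f.f k) (g.f k)) (n : ℤ) (z : tobj C P n) :
    tmapR C g n (tmapR C f n z) = 0 := by
  induction z using DirectSum.induction_on with
  | zero => simp
  | of i x =>
    rw [tmapR_of, tmapR_of, mtMap_comp_apply]
    have h0 : ((g.f (n - i)).hom : W.X (n - i) →ₗ[R] Q.X (n - i)) ∘ₗ
        ((f.f (n - i)).hom : P.X (n - i) →ₗ[R] W.X (n - i)) = 0 :=
      LinearMap.ext fun a => ((hfg (n - i)) (f.f (n - i) a)).mpr ⟨a, rfl⟩
    rw [h0, mtMap_zero_right, map_zero]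
  | add x y hx hy => rw [map_add, map_add, hx, hy, add_zero]

lemma acyc_mem (hW : TAcyclic C W) (n : ℤ) (x : tobj C W n) (hx : td C W n x = 0) :
    x ∈ tB C W n := by
  have h : n = n - 1 + 1 := by ring
  have h2 : td C W (n - 1 + 1) (tcast C W h x) = 0 := by
    rw [td_tcast, hx, map_zero]
  obtain ⟨y, hy⟩ := (hW (n - 1) (tcast C W h x)).mp h2
  have h3 : tcast C W h x ∈ tB C W (n - 1 + 1) := by
    rw [tB_eq_range]
    exact ⟨y, hy⟩
  rwa [tcast_mem_tB] at h3

end CxRE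

end PA

end ProofAux
/-- Proposition 3.7: the class of `𝒞`-acyclic complexes is closed under categorically
pure subcomplexes and quotients. -/
theorem cAcyclic_catPure_closed (𝒞 : Set (CxOp R)) {P W Q : Cx R}
    (f : P ⟶ W) (g : W ⟶ Q) (h : CatPureSES f g) (hW : CAcyclic 𝒞 W) :
    CAcyclic 𝒞 P ∧ CAcyclic 𝒞 Q := by
  obtain ⟨hmod, hpur⟩ := h
  constructor
  · -- P is 𝒞-acyclic
    intro C hC n
    refine fun y => ⟨?_, ?_⟩
    · intro hy
      have h1 : td C W (n + 1) (tmapR C f (n + 1) y) = 0 := by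
        rw [← PA.tmapR_td, hy, map_zero]
      have h2 : tmapR C f (n + 1) y ∈ tB C W (n + 1) :=
        PA.acyc_mem C (hW C hC) (n + 1) _ h1
      have h3 := (hpur C (n + 1)).1 y h2
      rw [PA.tB_eq_range] at h3
      obtain ⟨x, hx⟩ := h3
      exact ⟨x, hx⟩
    · rintro ⟨x, rfl⟩
      exact PA.td_td C P n x
  · -- Q is 𝒞-acyclic
    intro C hC n
    refine fun y => ⟨?_, ?_⟩
    · intro hy
      obtain ⟨b, rfl⟩ := PA.tmapR_surjective C g (fun k => (hmod k).2.2) (n + 1) y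
      have e1 : tmapR C g (n + 1 + 1) (td C W (n + 1) b) = 0 := by
        rw [PA.tmapR_td]
        exact hy
      obtain ⟨a, ha⟩ := PA.tmapR_exact C f g (fun k => (hmod k).2.1)
        (fun k => (hmod k).2.2) (n + 1 + 1) _ e1
      have e2 : td C W (n + 1) b ∈ tB C W (n + 1 + 1) :=
        PA.acyc_mem C (hW C hC) _ _ (PA.td_td C W (n + 1) b)
      rw [← ha] at e2
      have e3 := (hpur C (n + 1 + 1)).1 a e2
      rw [PA.tB_eq_range] at e3
      obtain ⟨p, rfl⟩ := e3
      have e4 : td C W (n + 1) (b - tmapR C f (n + 1) p) = 0 := by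
        rw [map_sub, ← PA.tmapR_td, ha, sub_self]
      have e5 : b - tmapR C f (n + 1) p ∈ tB C W (n + 1) :=
        PA.acyc_mem C (hW C hC) (n + 1) _ e4
      rw [PA.tB_eq_range] at e5
      obtain ⟨c, hc⟩ := e5
      refine ⟨tmapR C g n c, ?_⟩
      rw [← PA.tmapR_td, hc, map_sub,
        PA.tmapR_gf_zero C f g (fun k => (hmod k).2.1), sub_zero]
    · rintro ⟨x, rfl⟩
      exact PA.td_td C Q n x

end KFlatPaper
end
end
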